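/- Let M₀, …, Mₙ be Hermitian d×d complex matrices, set M(x) = M₀x₀ + ⋯ + Mₙxₙ, and suppose e ∈ ℝⁿ⁺¹ is such that M(e) is positive definite. Then the connected component of e in the set {x ∈ ℝⁿ⁺¹ : det M(x) ≠ 0} is exactly {x ∈ ℝⁿ⁺¹ : M(x) is positive definite}; in particular, the hyperbolicity cone of f = det(M(x)) with respect to e is a spectrahedron. -/

import Mathlib

open scoped ComplexOrder
open Matrix

lemma herm_quad_star {d : ℕ} {A : Matrix (Fin d) (Fin d) ℂ} (hA : A.IsHermitian)
    (v : Fin d → ℂ) : (star v ⬝ᵥ A *ᵥ v).im = 0 := by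
  have h : star (star v ⬝ᵥ A *ᵥ v) = star v ⬝ᵥ A *ᵥ v := by
    conv_lhs => rw [star_dotProduct, star_star, star_mulVec, hA.eq, ← dotProduct_mulVec]
  rw [← Complex.conj_eq_iff_im]
  exact h

lemma posDef_iff_re {d : ℕ} {A : Matrix (Fin d) (Fin d) ℂ} (hA : A.IsHermitian) :
    A.PosDef ↔ ∀ v : Fin d → ℂ, v ≠ 0 → 0 < (star v ⬝ᵥ A *ᵥ v).re := by
  constructor
  · intro h v hv
    simpa using h.re_dotProduct_pos hv
  · intro h
    refine posDef_iff_dotProduct_mulVec.mpr ⟨hA, fun v hv => ?_⟩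
    rw [Complex.lt_def]
    exact ⟨by simpa using h v hv, by simp [herm_quad_star hA v]⟩

lemma posSemidef_iff_re {d : ℕ} {A : Matrix (Fin d) (Fin d) ℂ} (hA : A.IsHermitian) :
    A.PosSemidef ↔ ∀ v : Fin d → ℂ, 0 ≤ (star v ⬝ᵥ A *ᵥ v).re := by
  constructor
  · intro h v
    simpa using h.re_dotProduct_nonneg v
  · intro h
    refine posSemidef_iff_dotProduct_mulVec.mpr ⟨hA, fun v => ?_⟩
    rw [Complex.le_def]
    exact ⟨by simpa using h v, by simp [herm_quad_star hA v]⟩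

lemma posDef_smul {d : ℕ} {A : Matrix (Fin d) (Fin d) ℂ} (hA : A.PosDef) {t : ℝ}
    (ht : 0 < t) : ((t : ℂ) • A).PosDef := by
  refine posDef_iff_dotProduct_mulVec.mpr ⟨?_, fun v hv => ?_⟩
  · rw [IsHermitian, conjTranspose_smul, hA.1.eq, Complex.star_def, Complex.conj_ofReal]
  · rw [smul_mulVec, dotProduct_smul, smul_eq_mul]
    exact mul_pos (by exact_mod_cast ht) ((posDef_iff_dotProduct_mulVec.mp hA).2 hv)

lemma posDef_of_psd_det {d : ℕ} {A : Matrix (Fin d) (Fin d) ℂ} (hA : A.PosSemidef)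
    (hdet : A.det ≠ 0) : A.PosDef := by
  refine posDef_iff_dotProduct_mulVec.mpr ⟨hA.1, fun v hv => lt_of_le_of_ne ((posSemidef_iff_dotProduct_mulVec.mp hA).2 v) fun h => hv ?_⟩
  have h0 : A *ᵥ v = 0 := (hA.dotProduct_mulVec_zero_iff v).mp h.symm
  have : A⁻¹ *ᵥ (A *ᵥ v) = v := by
    rw [mulVec_mulVec, nonsing_inv_mul A (isUnit_iff_ne_zero.mpr hdet), one_mulVec]
  rw [← this, h0, mulVec_zero]

lemma posDef_of_unit_sphere {d : ℕ} {A : Matrix (Fin d) (Fin d) ℂ} (hA : A.IsHermitian)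
    (h : ∀ v : Fin d → ℂ, ‖v‖ = 1 → 0 < (star v ⬝ᵥ A *ᵥ v).re) : A.PosDef := by
  rw [posDef_iff_re hA]
  intro v hv
  set c : ℝ := ‖v‖⁻¹ with hc
  have hvnorm : 0 < ‖v‖ := norm_pos_iff.mpr hv
  have hcpos : 0 < c := inv_pos.mpr hvnorm
  have hw : ‖(c : ℂ) • v‖ = 1 := by
    rw [norm_smul, Complex.norm_real, Real.norm_eq_abs, abs_of_pos hcpos, hc,
      inv_mul_cancel₀ hvnorm.ne']
  have key := h ((c : ℂ) • v) hw
  have : star ((c : ℂ) • v) ⬝ᵥ A *ᵥ ((c : ℂ) • v) =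
      ((c * c : ℝ) : ℂ) * (star v ⬝ᵥ A *ᵥ v) := by
    rw [star_smul, mulVec_smul, smul_dotProduct, dotProduct_smul]
    push_cast
    simp [smul_eq_mul, Complex.star_def, Complex.conj_ofReal]
    ring
  rw [this] at key
  have : 0 < (c * c) * (star v ⬝ᵥ A *ᵥ v).re := by
    simpa [Complex.mul_re] using key
  nlinarith [mul_pos hcpos hcpos]

variable {n d : ℕ}

lemma pencil_herm (M : Fin (n + 1) → Matrix (Fin d) (Fin d) ℂ)
    (hM : ∀ k, (M k).IsHermitian) (x : Fin (n + 1) → ℝ) :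
    (∑ k, (x k : ℂ) • M k).IsHermitian := by
  unfold Matrix.IsHermitian
  rw [conjTranspose_sum]
  refine Finset.sum_congr rfl fun k _ => ?_
  rw [conjTranspose_smul, (hM k).eq, Complex.star_def, Complex.conj_ofReal]

lemma pencil_cont (M : Fin (n + 1) → Matrix (Fin d) (Fin d) ℂ) :
    Continuous fun x : Fin (n + 1) → ℝ => ∑ k, (x k : ℂ) • M k := by
  refine continuous_finset_sum _ fun k _ => ?_
  exact (Complex.continuous_ofReal.comp (continuous_apply k)).smul continuous_const

lemma pencil_quad_cont (M : Fin (n + 1) → Matrix (Fin d) (Fin d) ℂ) :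
    Continuous fun p : (Fin (n + 1) → ℝ) × (Fin d → ℂ) =>
      (star p.2 ⬝ᵥ (∑ k, (p.1 k : ℂ) • M k) *ᵥ p.2).re := by
  refine Complex.continuous_re.comp ?_
  simp only [dotProduct, mulVec, Pi.star_apply]
  refine continuous_finset_sum _ fun i _ => Continuous.mul ?_ ?_
  · exact continuous_star.comp ((continuous_apply i).comp continuous_snd)
  · refine continuous_finset_sum _ fun j _ => Continuous.mul ?_ ?_
    · have h1 : Continuous fun p : (Fin (n + 1) → ℝ) × (Fin d → ℂ) =>
          (∑ k, (p.1 k : ℂ) • M k) := (pencil_cont M).comp continuous_fst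
      exact ((continuous_apply j).comp (continuous_apply i)).comp h1
    · exact (continuous_apply j).comp continuous_snd

lemma pencil_linear (M : Fin (n + 1) → Matrix (Fin d) (Fin d) ℂ)
    (x e : Fin (n + 1) → ℝ) (t : ℝ) :
    (∑ k, (((x + t • e) k : ℝ) : ℂ) • M k) =
      (∑ k, (x k : ℂ) • M k) + (t : ℂ) • ∑ k, (e k : ℂ) • M k := by
  rw [Finset.smul_sum, ← Finset.sum_add_distrib]
  refine Finset.sum_congr rfl fun k _ => ?_
  simp only [Pi.add_apply, Pi.smul_apply, smul_eq_mul]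
  push_cast
  rw [add_smul, mul_smul]

def realify {d : ℕ} (A : Matrix (Fin d) (Fin d) ℂ) :
    Matrix (Fin d ⊕ Fin d) (Fin d ⊕ Fin d) ℝ :=
  Matrix.fromBlocks (A.map Complex.re) (-(A.map Complex.im))
    (A.map Complex.im) (A.map Complex.re)

def cvec {d : ℕ} (w : Fin d ⊕ Fin d → ℝ) : Fin d → ℂ :=
  fun i => (w (Sum.inl i) : ℂ) + (w (Sum.inr i) : ℂ) * Complex.I

lemma realify_isSymm {d : ℕ} {A : Matrix (Fin d) (Fin d) ℂ} (hA : A.IsHermitian) :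
    (realify A).IsSymm := by
  have key : ∀ i j, star (A j i) = A i j := hA.apply
  unfold Matrix.IsSymm
  ext i j
  have h1 : ∀ i j : Fin d, (A j i).re = (A i j).re := fun i j => by
    rw [← key i j]; simp [Complex.star_def]
  have h2 : ∀ i j : Fin d, (A j i).im = -(A i j).im := fun i j => by
    rw [← key i j]; simp [Complex.star_def]
  rcases i with i | i <;> rcases j with j | j <;>
    simp only [realify, transpose_apply, fromBlocks_apply₁₁, fromBlocks_apply₁₂,
      fromBlocks_apply₂₁, fromBlocks_apply₂₂, map_apply, Matrix.neg_apply, Pi.neg_apply]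
  · exact h1 i j
  · exact h2 i j
  · rw [h2 i j]; ring
  · exact h1 i j

lemma quad_realify {d : ℕ} (A : Matrix (Fin d) (Fin d) ℂ) (w : Fin d ⊕ Fin d → ℝ) :
    w ⬝ᵥ (realify A *ᵥ w) = (star (cvec w) ⬝ᵥ A *ᵥ (cvec w)).re := by
  simp only [dotProduct, mulVec, Pi.star_apply]
  rw [Complex.re_sum]
  simp only [Fintype.sum_sum_type]
  rw [← Finset.sum_add_distrib]
  refine Finset.sum_congr rfl fun i _ => ?_
  rw [Finset.mul_sum, Complex.re_sum]
  rw [mul_add, mul_add, Finset.mul_sum, Finset.mul_sum, Finset.mul_sum, Finset.mul_sum]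
  simp only [← Finset.sum_add_distrib]
  refine Finset.sum_congr rfl fun j _ => ?_
  simp only [realify, cvec, fromBlocks_apply₁₁, fromBlocks_apply₁₂, fromBlocks_apply₂₁,
    fromBlocks_apply₂₂, map_apply, Matrix.neg_apply, Pi.neg_apply, Complex.star_def, map_add,
    _root_.map_mul, Complex.conj_I, Complex.conj_ofReal, Complex.add_re, Complex.add_im,
    Complex.mul_re, Complex.mul_im, Complex.I_re, Complex.I_im, Complex.ofReal_re,
    Complex.ofReal_im, Complex.neg_re, Complex.neg_im, Complex.conj_re, Complex.conj_im]
  ring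
lemma cvec_rvec {d : ℕ} (v : Fin d → ℂ) :
    cvec (Sum.elim (fun i => (v i).re) (fun i => (v i).im)) = v := by
  funext i
  simp [cvec, Complex.re_add_im]

lemma realify_posSemidef_iff {d : ℕ} {A : Matrix (Fin d) (Fin d) ℂ}
    (hA : A.IsHermitian) : (realify A).PosSemidef ↔ A.PosSemidef := by
  constructor
  · intro h
    rw [posSemidef_iff_re hA]
    intro v
    have := (posSemidef_iff_dotProduct_mulVec.mp h).2 (Sum.elim (fun i => (v i).re) (fun i => (v i).im))
    rwa [star_trivial, quad_realify, cvec_rvec] at this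
  · intro h
    refine posSemidef_iff_dotProduct_mulVec.mpr ⟨?_, fun w => ?_⟩
    · show (realify A)ᴴ = realify A
      rw [conjTranspose_eq_transpose_of_trivial]
      exact realify_isSymm hA
    rw [star_trivial, quad_realify]
    simpa using h.re_dotProduct_nonneg (cvec w)

lemma realify_pencil {n d : ℕ} (M : Fin (n + 1) → Matrix (Fin d) (Fin d) ℂ)
    (x : Fin (n + 1) → ℝ) :
    realify (∑ k, (x k : ℂ) • M k) = ∑ k, x k • realify (M k) := by
  ext i j
  rcases i with i | i <;> rcases j with j | j <;>
    simp [realify, Matrix.sum_apply, Matrix.smul_apply, Complex.re_sum, Complex.im_sum,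
      Complex.mul_re, Complex.mul_im, smul_eq_mul, Finset.sum_neg_distrib]

lemma pencil_submatrix {n d m : ℕ} (R : Fin (n + 1) → Matrix (Fin d ⊕ Fin d) (Fin d ⊕ Fin d) ℝ)
    (ee : Fin m → Fin d ⊕ Fin d) (x : Fin (n + 1) → ℝ) :
    ∑ k, x k • (R k).submatrix ee ee = (∑ k, x k • R k).submatrix ee ee := by
  ext i j
  simp [Matrix.sum_apply, Matrix.smul_apply]

lemma pencil_comb {n d : ℕ} (M : Fin (n + 1) → Matrix (Fin d) (Fin d) ℂ)
    (a b : ℝ) (x y : Fin (n + 1) → ℝ) :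
    (∑ k, (((a • x + b • y) k : ℝ) : ℂ) • M k) =
      (a : ℂ) • (∑ k, (x k : ℂ) • M k) + (b : ℂ) • ∑ k, (y k : ℂ) • M k := by
  rw [Finset.smul_sum, Finset.smul_sum, ← Finset.sum_add_distrib]
  refine Finset.sum_congr rfl fun k _ => ?_
  simp only [Pi.add_apply, Pi.smul_apply, smul_eq_mul]
  push_cast
  rw [add_smul, mul_smul, mul_smul]

set_option maxHeartbeats 1000000 in
/-- If `M(x) = M₀x₀ + ⋯ + Mₙxₙ` is a Hermitian pencil and `M(e)` is positive
definite, then the connected component of `e` in `{x ∈ ℝⁿ⁺¹ : det M(x) ≠ 0}` is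
exactly `{x : M(x) positive definite}`; in particular the hyperbolicity cone of
`f = det M(x)` with respect to `e` is a spectrahedron (its closure is the
positive-semidefinite set of a real symmetric linear pencil). -/
theorem hyperbolicity_cone_spectrahedron
    (n d : ℕ) (M : Fin (n + 1) → Matrix (Fin d) (Fin d) ℂ)
    (hM : ∀ k, (M k).IsHermitian) (e : Fin (n + 1) → ℝ)
    (he : (∑ k, (e k : ℂ) • M k).PosDef) :
    connectedComponentIn {x : Fin (n + 1) → ℝ | (∑ k, (x k : ℂ) • M k).det ≠ 0} e =
      {x : Fin (n + 1) → ℝ | (∑ k, (x k : ℂ) • M k).PosDef} ∧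
    ∃ (m : ℕ) (N : Fin (n + 1) → Matrix (Fin m) (Fin m) ℝ), (∀ k, (N k).IsSymm) ∧
      closure (connectedComponentIn
          {x : Fin (n + 1) → ℝ | (∑ k, (x k : ℂ) • M k).det ≠ 0} e) =
        {x : Fin (n + 1) → ℝ | (∑ k, x k • N k).PosSemidef} := by
  classical
  have hherm : ∀ x : Fin (n + 1) → ℝ, (∑ k, (x k : ℂ) • M k).IsHermitian := pencil_herm M hM
  set S : Set (Fin (n + 1) → ℝ) := {x | (∑ k, (x k : ℂ) • M k).det ≠ 0} with hSdef
  set P : Set (Fin (n + 1) → ℝ) := {x | (∑ k, (x k : ℂ) • M k).PosDef} with hPdef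
  have hPS : P ⊆ S := fun x hx => (Matrix.PosDef.det_pos hx).ne'
  have hSopen : IsOpen S := by
    have : S = (fun x : Fin (n + 1) → ℝ => (∑ k, (x k : ℂ) • M k).det) ⁻¹' {0}ᶜ := by
      ext x; simp [hSdef]
    rw [this]
    exact isOpen_compl_singleton.preimage ((pencil_cont M).matrix_det)
  have hPopen : IsOpen P := by
    rw [isOpen_iff_forall_mem_open]
    intro x₀ hx₀
    have hn : IsOpen {p : (Fin (n + 1) → ℝ) × (Fin d → ℂ) |
        0 < (star p.2 ⬝ᵥ (∑ k, (p.1 k : ℂ) • M k) *ᵥ p.2).re} :=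
      isOpen_lt continuous_const (pencil_quad_cont M)
    have hsub : ({x₀} : Set (Fin (n + 1) → ℝ)) ×ˢ Metric.sphere (0 : Fin d → ℂ) 1 ⊆
        {p : (Fin (n + 1) → ℝ) × (Fin d → ℂ) |
          0 < (star p.2 ⬝ᵥ (∑ k, (p.1 k : ℂ) • M k) *ᵥ p.2).re} := by
      rintro ⟨a, w⟩ ⟨ha, hw⟩
      simp only [Set.mem_singleton_iff] at ha
      have hw1 : ‖w‖ = 1 := by simpa [mem_sphere_zero_iff_norm] using hw
      have hw0 : w ≠ 0 := by
        intro h; rw [h, norm_zero] at hw1; exact one_ne_zero hw1.symm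
      have hx' : (∑ k, (a k : ℂ) • M k).PosDef := by rw [ha]; exact hx₀
      simpa using hx'.re_dotProduct_pos hw0
    obtain ⟨u, v, hu, hv, hsu, htv, huv⟩ :=
      generalized_tube_lemma isCompact_singleton (isCompact_sphere 0 1) hn hsub
    refine ⟨u, fun y hy => ?_, hu, hsu rfl⟩
    show (∑ k, (y k : ℂ) • M k).PosDef
    exact posDef_of_unit_sphere (hherm y) fun w hw =>
      huv (Set.mk_mem_prod hy (htv (by simpa [mem_sphere_zero_iff_norm] using hw)))
  have hSPopen : IsOpen (S \ P) := by
    rw [isOpen_iff_forall_mem_open]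
    rintro x ⟨hxS, hxP⟩
    have hnpsd : ¬ (∑ k, (x k : ℂ) • M k).PosSemidef := fun h => hxP (posDef_of_psd_det h hxS)
    rw [posSemidef_iff_re (hherm x)] at hnpsd
    push_neg at hnpsd
    obtain ⟨v, hv⟩ := hnpsd
    have hv0 : v ≠ 0 := by
      intro h; rw [h] at hv; simp at hv
    refine ⟨S ∩ {y | (star v ⬝ᵥ (∑ k, (y k : ℂ) • M k) *ᵥ v).re < 0}, ?_, ?_, hxS, hv⟩
    · rintro y ⟨hyS, hylt⟩
      refine ⟨hyS, fun hyP => ?_⟩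
      have : (∑ k, (y k : ℂ) • M k).PosDef := hyP
      have := this.re_dotProduct_pos hv0
      simp only [RCLike.re_to_complex] at this
      exact absurd hylt (not_lt.mpr this.le)
    · exact hSopen.inter (isOpen_lt
        ((pencil_quad_cont M).comp (continuous_id.prodMk continuous_const))
        continuous_const)
  have heP : e ∈ P := he
  have hPconv : Convex ℝ P := by
    intro x hx y hy a b ha hb hab
    show (∑ k, (((a • x + b • y) k : ℝ) : ℂ) • M k).PosDef
    rw [pencil_comb]
    rcases eq_or_lt_of_le ha with ha0 | ha0
    · have hb1 : b = 1 := by linarith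
      simp only [← ha0, hb1, Complex.ofReal_zero, Complex.ofReal_one, zero_smul, one_smul,
        zero_add]
      exact hy
    · rcases eq_or_lt_of_le hb with hb0 | hb0
      · have ha1 : a = 1 := by linarith
        simp only [← hb0, ha1, Complex.ofReal_zero, Complex.ofReal_one, zero_smul, one_smul,
          add_zero]
        exact hx
      · exact Matrix.PosDef.add (posDef_smul hx ha0) (posDef_smul hy hb0)
  have hfirst : connectedComponentIn S e = P := by
    apply Set.Subset.antisymm
    · intro x hx
      by_contra hxP
      have hCpre : IsPreconnected (connectedComponentIn S e) :=
        isPreconnected_connectedComponentIn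
      have hCS := connectedComponentIn_subset S e
      have hne := hCpre P (S \ P) hPopen hSPopen
        (fun y hy => (em (y ∈ P)).elim Or.inl fun h => Or.inr ⟨hCS hy, h⟩)
        ⟨e, mem_connectedComponentIn (hPS heP), heP⟩
        ⟨x, hx, hCS hx, hxP⟩
      obtain ⟨z, _, hzP, hzSP⟩ := hne
      exact hzSP.2 hzP
    · exact hPconv.isPreconnected.subset_connectedComponentIn heP hPS
  refine ⟨hfirst, d + d, fun k => (realify (M k)).submatrix ⇑finSumFinEquiv.symm
      ⇑finSumFinEquiv.symm, fun k => (realify_isSymm (hM k)).submatrix _, ?_⟩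
  rw [hfirst]
  have hclosedPSD : IsClosed {x : Fin (n + 1) → ℝ | (∑ k, (x k : ℂ) • M k).PosSemidef} := by
    have hset : {x : Fin (n + 1) → ℝ | (∑ k, (x k : ℂ) • M k).PosSemidef} =
        ⋂ v : Fin d → ℂ, {x | 0 ≤ (star v ⬝ᵥ (∑ k, (x k : ℂ) • M k) *ᵥ v).re} := by
      ext x
      simp only [Set.mem_iInter, Set.mem_setOf_eq]
      exact posSemidef_iff_re (hherm x)
    rw [hset]
    exact isClosed_iInter fun v => isClosed_le continuous_const
      ((pencil_quad_cont M).comp (continuous_id.prodMk continuous_const))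
  have hsetN : {x : Fin (n + 1) → ℝ |
      (∑ k, x k • (realify (M k)).submatrix ⇑finSumFinEquiv.symm ⇑finSumFinEquiv.symm).PosSemidef}
      = {x : Fin (n + 1) → ℝ | (∑ k, (x k : ℂ) • M k).PosSemidef} := by
    ext x
    rw [Set.mem_setOf_eq, Set.mem_setOf_eq, pencil_submatrix, ← realify_pencil,
      Matrix.posSemidef_submatrix_equiv finSumFinEquiv.symm,
      realify_posSemidef_iff (hherm x)]
  rw [hsetN]
  apply Set.Subset.antisymm
  · exact closure_minimal (fun x hx => Matrix.PosDef.posSemidef hx) hclosedPSD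
  · intro x hx
    have h0 : Filter.Tendsto (fun m : ℕ => (1 / (m + 1) : ℝ)) Filter.atTop (nhds 0) :=
      tendsto_one_div_add_atTop_nhds_zero_nat
    have ht : Filter.Tendsto (fun m : ℕ => x + (1 / (m + 1) : ℝ) • e)
        Filter.atTop (nhds x) := by
      have h1 := Filter.Tendsto.smul_const h0 e
      have h2 := Filter.Tendsto.add (tendsto_const_nhds (x := x)) h1
      simpa using h2
    refine mem_closure_of_tendsto ht (Filter.Eventually.of_forall fun m => ?_)
    show (∑ k, (((x + (1 / (m + 1) : ℝ) • e) k : ℝ) : ℂ) • M k).PosDef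
    rw [pencil_linear]
    exact Matrix.PosDef.posSemidef_add hx (posDef_smul he (by positivity))
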